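/- Let G be a countably infinite group and let F₂ be the free group on two generators. Let G and F₂ both act in a Borel way on a standard Borel space Z (not necessarily freely), with every F₂-orbit contained in a G-orbit. Assume there is a Borel cocycle α : F₂ × Z → G (i.e. α(f₂f₁, z) = α(f₂, f₁·z)·α(f₁, z)) satisfying α(f, z)·z = f·z for all f ∈ F₂ and z ∈ Z, and such that for each z ∈ Z the map f ↦ α(f, z) is injective. Then there exist a compact metrizable abelian group K, a map β : G × (2^ℕ)^G × Z → Aff(K) (each β(g, y, z) a Borel affine bijection of K) satisfying the cocycle identity β(g₂g₁, y, z) = β(g₂, g₁·y, g₁·z) ∘ β(g₁, y, z), and a Borel bijection φ : 2^G × Z → K × (2^ℕ)^G × Z which is G-equivariant when G acts on 2^G × Z diagonally (shift on 2^G) and on K × (2^ℕ)^G × Z by the skew product g·(k, y, z) = (β(g, y, z)(k), g·y, g·z). Moreover, if Z is a Polish space on which G and F₂ act continuously and α is continuous (G and F₂ discrete), then the induced projection π : 2^G × Z → (2^ℕ)^G (the (2^ℕ)^G-component of φ) is continuous. -/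

import Mathlib

/-- The free group on two generators. -/
abbrev F2 := FreeGroup (Fin 2)

/-- The left shift action of `G` on the Bernoulli shift `K^G`. -/
def bshift {G : Type*} [Group G] (K : Type*) (g : G) (x : G → K) : G → K :=
  fun h => x (g⁻¹ * h)

namespace Stmt10

instance : Countable (FreeGroup ℕ) := FreeGroup.toWord_injective.countable
instance : Infinite (FreeGroup ℕ) := Infinite.of_injective FreeGroup.of FreeGroup.of_injective

/-- a fixed enumeration of `FreeGroup ℕ` -/
noncomputable def eW : FreeGroup ℕ ≃ ℕ := (nonempty_equiv_of_countable).some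

-- ==== Part 1: the free family and its injectivity ====

def Fu : F2 := FreeGroup.of 0
def Fv : F2 := FreeGroup.of 1

/-- the free family `uⁿ v u⁻ⁿ` -/
def tgen (n : ℕ) : F2 := Fu ^ n * Fv * (Fu ^ n)⁻¹

/-- homomorphism from the free group on ℕ sending the generators to `tgen` -/
def Φ : FreeGroup ℕ →* F2 := FreeGroup.lift tgen

@[simp] lemma Φ_of (n : ℕ) : Φ (FreeGroup.of n) = tgen n := FreeGroup.lift_apply_of

/-- permutation model used to prove injectivity of `Φ` -/
abbrev XX := FreeGroup ℤ × ℤ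

def Uperm : Equiv.Perm XX := (Equiv.refl _).prodCongr (Equiv.addRight (1 : ℤ))

def Vperm : Equiv.Perm XX where
  toFun p := (FreeGroup.of p.2 * p.1, p.2)
  invFun p := ((FreeGroup.of p.2)⁻¹ * p.1, p.2)
  left_inv p := by simp [mul_assoc]
  right_inv p := by simp [mul_assoc]

def ρ : F2 →* Equiv.Perm XX := FreeGroup.lift (fun i => if i = 0 then Uperm else Vperm)

@[simp] lemma ρ_u : ρ Fu = Uperm := by simp [ρ, Fu]
@[simp] lemma ρ_v : ρ Fv = Vperm := by simp [ρ, Fv]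

lemma Uperm_pow (n : ℕ) (q : XX) : (Uperm ^ n) q = (q.1, q.2 + n) := by
  induction n with
  | zero => simp
  | succ m ih =>
    rw [pow_succ', Equiv.Perm.mul_apply, ih]
    have huq : Uperm (q.1, q.2 + (m:ℤ)) = (q.1, q.2 + (m:ℤ) + 1) := rfl
    rw [huq]
    push_cast
    rw [add_assoc]

lemma Uperm_pow_inv (n : ℕ) (q : XX) : (Uperm ^ n)⁻¹ q = (q.1, q.2 - n) := by
  have : (Uperm ^ n) (q.1, q.2 - n) = q := by rw [Uperm_pow]; simp
  calc (Uperm ^ n)⁻¹ q = (Uperm ^ n)⁻¹ ((Uperm ^ n) (q.1, q.2 - n)) := by rw [this]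
  _ = (q.1, q.2 - n) := by simp

lemma ρ_tgen (n : ℕ) (ξ : FreeGroup ℤ) (m : ℤ) :
    ρ (tgen n) (ξ, m) = (FreeGroup.of (m - n) * ξ, m) := by
  simp only [tgen, map_mul, map_inv, map_pow, ρ_u, ρ_v, Equiv.Perm.mul_apply]
  rw [Uperm_pow_inv]
  show (Uperm ^ n) (Vperm _) = _
  rw [show Vperm ((ξ, m - n) : XX) = (FreeGroup.of (m - n) * ξ, m - n) from rfl, Uperm_pow]
  simp

/-- injective monoid hom `FreeGroup ℕ →* FreeGroup ℤ` -/
def μ : FreeGroup ℕ →* FreeGroup ℤ := FreeGroup.map (fun n => -(n : ℤ))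

@[simp] lemma μ_of (n : ℕ) : μ (FreeGroup.of n) = FreeGroup.of (-(n:ℤ)) := FreeGroup.map.of

lemma μ_injective : Function.Injective μ := by
  intro x y h
  have key : ∀ w : FreeGroup ℕ, FreeGroup.map (fun m : ℤ => (-m).toNat) (μ w) = w := by
    intro w
    have hcomp : (FreeGroup.map (fun m : ℤ => (-m).toNat)).comp μ = MonoidHom.id _ := by
      apply FreeGroup.ext_hom
      intro n
      simp [μ, FreeGroup.map.of]
    have := DFunLike.congr_fun hcomp w
    simpa using this
  calc x = FreeGroup.map (fun m : ℤ => (-m).toNat) (μ x) := (key x).symm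
  _ = FreeGroup.map (fun m : ℤ => (-m).toNat) (μ y) := by rw [h]
  _ = y := key y

lemma ρΦ (W : FreeGroup ℕ) (ξ : FreeGroup ℤ) : ρ (Φ W) (ξ, 0) = (μ W * ξ, 0) := by
  induction W using FreeGroup.induction_on generalizing ξ with
  | C1 => simp
  | of n => simp [ρ_tgen]
  | inv_of n _ih =>
    simp only [map_inv, Φ_of, μ_of]
    have h1 : ρ (tgen n) ((FreeGroup.of (-(n:ℤ)))⁻¹ * ξ, 0) = (ξ, 0) := by
      rw [ρ_tgen]; simp [zero_sub]
    calc (ρ (tgen n))⁻¹ (ξ, 0) = (ρ (tgen n))⁻¹ (ρ (tgen n) ((FreeGroup.of (-(n:ℤ)))⁻¹ * ξ, 0)) := by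
          rw [h1]
    _ = ((FreeGroup.of (-(n:ℤ)))⁻¹ * ξ, 0) := by simp
  | mul x y ihx ihy =>
    rw [map_mul, map_mul, Equiv.Perm.mul_apply, ihy, ihx, map_mul, mul_assoc]

lemma Φ_injective : Function.Injective Φ := by
  have : ∀ W, Φ W = 1 → W = 1 := by
    intro W hW
    have h2 := ρΦ W 1
    rw [hW] at h2
    simp only [map_one, Equiv.Perm.coe_one, id_eq, mul_one] at h2
    have h3 : μ W = 1 := (Prod.ext_iff.mp h2).1.symm
    have h4 : μ W = μ 1 := by simpa using h3
    exact μ_injective h4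
  intro x y h
  have h1 : Φ (x * y⁻¹) = 1 := by rw [map_mul, map_inv, h]; simp
  have hxy := this _ h1
  exact mul_inv_eq_one.mp hxy


/-- All the data and hypotheses of the theorem, bundled. -/
structure Setup (G : Type*) [Group G] (Z : Type) where
  a : G → Z → Z
  b : F2 → Z → Z
  α : F2 → Z → G
  ha1 : a 1 = id
  hamul : ∀ g g' : G, a (g * g') = a g ∘ a g'
  hb1 : b 1 = id
  hαcoc : ∀ (f₁ f₂ : F2) (z : Z), α (f₂ * f₁) z = α f₂ (b f₁ z) * α f₁ z
  hα : ∀ (f : F2) (z : Z), a (α f z) z = b f z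
  hαinj : ∀ z : Z, Function.Injective fun f : F2 => α f z
  eG : G ≃ ℕ

namespace Setup

attribute [local instance] Classical.propDecidable

variable {G : Type*} [Group G] {Z : Type} (S : Setup G Z)

lemma amul' (g g' : G) (z : Z) : S.a g (S.a g' z) = S.a (g * g') z :=
  (congrFun (S.hamul g g') z).symm

lemma aone' (z : Z) : S.a 1 z = z := by rw [S.ha1]; rfl

lemma α_one (z : Z) : S.α 1 z = 1 := by
  have := S.hαcoc 1 1 z
  rw [S.hb1] at this
  simp only [mul_one, id_eq] at this
  exact right_eq_mul.mp this

/-- the fiberwise free `F2`-action on `G` over the point `z` -/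
def act (z : Z) (f : F2) (h : G) : G := h * (S.α f (S.a h⁻¹ z))⁻¹

lemma act_one (z : Z) (h : G) : S.act z 1 h = h := by
  simp [act, S.α_one]

lemma act_act (z : Z) (f₁ f₂ : F2) (h : G) :
    S.act z f₂ (S.act z f₁ h) = S.act z (f₂ * f₁) h := by
  have key : S.a (S.act z f₁ h)⁻¹ z = S.b f₁ (S.a h⁻¹ z) := by
    have h1 : (S.act z f₁ h)⁻¹ = S.α f₁ (S.a h⁻¹ z) * h⁻¹ := by
      rw [act, mul_inv_rev, inv_inv]
    rw [h1, ← S.amul', S.hα]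
  rw [show S.act z f₂ (S.act z f₁ h)
      = S.act z f₁ h * (S.α f₂ (S.a (S.act z f₁ h)⁻¹ z))⁻¹ from rfl, key, act, act,
    S.hαcoc f₁ f₂ (S.a h⁻¹ z), mul_inv_rev, mul_assoc]

lemma act_free (z : Z) (f : F2) (h : G) (hfix : S.act z f h = h) : f = 1 := by
  have h1 : S.α f (S.a h⁻¹ z) = 1 := by
    have := hfix
    simp only [act] at this
    have h2 : (S.α f (S.a h⁻¹ z))⁻¹ = 1 := by
      simpa using this
    simpa using congrArg (·⁻¹) h2
  have h3 : S.α f (S.a h⁻¹ z) = S.α 1 (S.a h⁻¹ z) := by rw [h1, S.α_one]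
  exact S.hαinj (S.a h⁻¹ z) h3

lemma act_equiv (g : G) (z : Z) (f : F2) (h : G) :
    S.act (S.a g z) f (g * h) = g * S.act z f h := by
  have h1 : S.a (h⁻¹ * g⁻¹) (S.a g z) = S.a h⁻¹ z := by
    rw [S.amul', mul_assoc, inv_mul_cancel, mul_one]
  simp [act, mul_inv_rev, h1, mul_assoc]

lemma act_equiv' (g : G) (z : Z) (f : F2) (h : G) :
    S.act (S.a g z) f h = g * S.act z f (g⁻¹ * h) := by
  have := S.act_equiv g z f (g⁻¹ * h)
  rwa [mul_inv_cancel_left] at this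

/-- cancellation in the fiberwise action -/
lemma act_cancel (z : Z) (f f' : F2) (h : G) (heq : S.act z f h = S.act z f' h) : f = f' := by
  have h1 : S.act z (f'⁻¹ * f) h = h := by
    rw [← S.act_act z f f'⁻¹ h, heq, S.act_act, inv_mul_cancel, S.act_one]
  have := S.act_free z _ _ h1
  rwa [inv_mul_eq_one, eq_comm] at this

lemma act_cancelW (z : Z) (W W' : FreeGroup ℕ) (h : G)
    (heq : S.act z (Φ W) h = S.act z (Φ W') h) : W = W' :=
  Φ_injective (S.act_cancel z (Φ W) (Φ W') h heq)

/-! ### orbit representatives -/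

lemma orb_nonempty (z : Z) (h : G) : ∃ n : ℕ, ∃ W : FreeGroup ℕ,
    S.act z (Φ W) h = S.eG.symm n :=
  ⟨S.eG h, 1, by rw [map_one, S.act_one]; simp⟩

/-- the minimal index of a point in the `T`-orbit of `h` -/
noncomputable def minIdx (z : Z) (h : G) : ℕ := Nat.find (S.orb_nonempty z h)

/-- the basepoint of the `T`-orbit of `h` -/
noncomputable def rep (z : Z) (h : G) : G := S.eG.symm (S.minIdx z h)

lemma rep_orb (z : Z) (h : G) : ∃ W : FreeGroup ℕ, S.act z (Φ W) h = S.rep z h :=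
  Nat.find_spec (S.orb_nonempty z h)

lemma rep_congr (z : Z) (h h' : G) (V : FreeGroup ℕ) (hV : S.act z (Φ V) h = h') :
    S.rep z h' = S.rep z h := by
  have hiff : ∀ n, (∃ W, S.act z (Φ W) h' = S.eG.symm n) ↔
      (∃ W, S.act z (Φ W) h = S.eG.symm n) := by
    intro n
    constructor
    · rintro ⟨W, hW⟩
      exact ⟨W * V, by rw [map_mul, ← S.act_act, hV, hW]⟩
    · rintro ⟨W, hW⟩
      refine ⟨W * V⁻¹, ?_⟩
      have hback : S.act z (Φ V⁻¹) h' = h := by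
        rw [← hV, S.act_act, ← map_mul, inv_mul_cancel, map_one, S.act_one]
      rw [map_mul, ← S.act_act, hback, hW]
  have : S.minIdx z h' = S.minIdx z h := by
    apply le_antisymm
    · exact Nat.find_le ((hiff _).mpr (Nat.find_spec (S.orb_nonempty z h)))
    · exact Nat.find_le ((hiff _).mp (Nat.find_spec (S.orb_nonempty z h')))
  simp [rep, this]

lemma rep_rep (z : Z) (h : G) : S.rep z (S.rep z h) = S.rep z h := by
  obtain ⟨W, hW⟩ := S.rep_orb z h
  exact S.rep_congr z h (S.rep z h) W hW

lemma rep_act (z : Z) (f : F2) (W : FreeGroup ℕ) (hf : Φ W = f) (h : G) :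
    S.rep z (S.act z f h) = S.rep z h :=
  S.rep_congr z h (S.act z f h) W (by rw [hf])

/-! ### the chosen word from the basepoint -/

lemma wsel_nonempty (z : Z) (h : G) :
    ∃ m : ℕ, S.act z (Φ (eW.symm m)) (S.rep z h) = h := by
  obtain ⟨W, hW⟩ := S.rep_orb z h
  refine ⟨eW W⁻¹, ?_⟩
  rw [Equiv.symm_apply_apply, ← hW, S.act_act, ← map_mul, inv_mul_cancel, map_one, S.act_one]

/-- the word carrying the basepoint of the orbit of `h` to `h` -/
noncomputable def wsel (z : Z) (h : G) : FreeGroup ℕ :=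
  eW.symm (Nat.find (S.wsel_nonempty z h))

lemma wsel_spec (z : Z) (h : G) : S.act z (Φ (S.wsel z h)) (S.rep z h) = h :=
  Nat.find_spec (S.wsel_nonempty z h)

lemma wsel_unique (z : Z) (h : G) (W : FreeGroup ℕ)
    (hW : S.act z (Φ W) (S.rep z h) = h) : S.wsel z h = W :=
  S.act_cancelW z _ _ _ (by rw [S.wsel_spec z h, hW])

/-! ### path sums -/

/-- path-sum of the `y`-labels along the word `L`, starting at `p` -/
def pSum (y : G → ℕ → Bool) (z : Z) (p : G) : List (ℕ × Bool) → Bool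
  | [] => false
  | (n, e) :: L => xor (pSum y z p L)
      (if e then y (S.act z (Φ (FreeGroup.mk L)) p) n
       else y (S.act z (Φ (FreeGroup.mk ((n, false) :: L))) p) n)

@[simp] lemma pSum_nil (y : G → ℕ → Bool) (z : Z) (p : G) : S.pSum y z p [] = false := rfl

lemma pSum_cons (y : G → ℕ → Bool) (z : Z) (p : G) (n : ℕ) (e : Bool) (L : List (ℕ × Bool)) :
    S.pSum y z p ((n, e) :: L) = xor (S.pSum y z p L)
      (if e then y (S.act z (Φ (FreeGroup.mk L)) p) n
       else y (S.act z (Φ (FreeGroup.mk ((n, false) :: L))) p) n) := rfl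

lemma pSum_step (y : G → ℕ → Bool) (z : Z) (p : G) :
    ∀ L₁ L₂ : List (ℕ × Bool), FreeGroup.Red.Step L₁ L₂ → S.pSum y z p L₁ = S.pSum y z p L₂ := by
  intro L₁ L₂ hstep
  induction hstep with
  | @not L1 L2 x b =>
    induction L1 with
    | nil =>
      simp only [List.nil_append]
      cases b with
      | true =>
        rw [pSum_cons, pSum_cons]
        simp only [if_pos rfl, Bool.not_true, if_neg (Bool.false_ne_true)]
        cases S.pSum y z p L2 <;>
          cases y (S.act z (Φ (FreeGroup.mk ((x, false) :: L2))) p) x <;> rfl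
      | false =>
        rw [pSum_cons, pSum_cons]
        have hmk : FreeGroup.mk ((x, false) :: (x, true) :: L2) = FreeGroup.mk L2 := by
          have h0 : FreeGroup.Red.Step ([] ++ (x, false) :: (x, !false) :: L2) ([] ++ L2) :=
            FreeGroup.Red.Step.not
          exact Quot.sound h0
        simp only [Bool.not_false, if_pos rfl, if_neg (Bool.false_ne_true), hmk]
        cases S.pSum y z p L2 <;> cases y (S.act z (Φ (FreeGroup.mk L2)) p) x <;> rfl
    | cons hd tl ih =>
      obtain ⟨m, d⟩ := hd
      have hmk2 : FreeGroup.mk (tl ++ (x, b) :: (x, !b) :: L2) = FreeGroup.mk (tl ++ L2) := by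
        apply Quot.sound
        exact FreeGroup.Red.Step.not
      show S.pSum y z p ((m, d) :: (tl ++ (x, b) :: (x, !b) :: L2))
          = S.pSum y z p ((m, d) :: (tl ++ L2))
      rw [pSum_cons, pSum_cons, ih]
      congr 1
      have hmk3 : FreeGroup.mk ((m, false) :: (tl ++ (x, b) :: (x, !b) :: L2))
          = FreeGroup.mk ((m, false) :: (tl ++ L2)) := by
        apply Quot.sound
        exact @FreeGroup.Red.Step.not _ ((m, false) :: tl) L2 x b
      cases d <;> simp [hmk2, hmk3]

/-- path-sum as a function on the free group -/
def pSumF (y : G → ℕ → Bool) (z : Z) (W : FreeGroup ℕ) (p : G) : Bool :=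
  Quot.liftOn W (fun L => S.pSum y z p L) (S.pSum_step y z p)

@[simp] lemma pSumF_mk (y : G → ℕ → Bool) (z : Z) (L : List (ℕ × Bool)) (p : G) :
    S.pSumF y z (FreeGroup.mk L) p = S.pSum y z p L := rfl

@[simp] lemma pSumF_one (y : G → ℕ → Bool) (z : Z) (p : G) :
    S.pSumF y z 1 p = false := rfl

lemma of_mul_mk (n : ℕ) (L : List (ℕ × Bool)) :
    FreeGroup.of n * FreeGroup.mk L = FreeGroup.mk ((n, true) :: L) := by
  rw [show (FreeGroup.of n : FreeGroup ℕ) = FreeGroup.mk [(n, true)] from rfl,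
    FreeGroup.mul_mk]
  rfl

lemma ofinv_mul_mk (n : ℕ) (L : List (ℕ × Bool)) :
    (FreeGroup.of n)⁻¹ * FreeGroup.mk L = FreeGroup.mk ((n, false) :: L) := by
  rw [show (FreeGroup.of n : FreeGroup ℕ) = FreeGroup.mk [(n, true)] from rfl,
    FreeGroup.inv_mk, FreeGroup.mul_mk]
  rfl

lemma pSumF_cons (y : G → ℕ → Bool) (z : Z) (n : ℕ) (W : FreeGroup ℕ) (p : G) :
    S.pSumF y z (FreeGroup.of n * W) p
      = xor (S.pSumF y z W p) (y (S.act z (Φ W) p) n) := by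
  induction W using Quot.inductionOn with
  | h L =>
    rw [FreeGroup.quot_mk_eq_mk, of_mul_mk, pSumF_mk, pSumF_mk, pSum_cons, if_pos rfl]

lemma pSumF_cons_inv (y : G → ℕ → Bool) (z : Z) (n : ℕ) (W : FreeGroup ℕ) (p : G) :
    S.pSumF y z ((FreeGroup.of n)⁻¹ * W) p
      = xor (S.pSumF y z W p) (y (S.act z (Φ ((FreeGroup.of n)⁻¹ * W)) p) n) := by
  induction W using Quot.inductionOn with
  | h L =>
    rw [FreeGroup.quot_mk_eq_mk, ofinv_mul_mk, pSumF_mk, pSumF_mk, pSum_cons,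
      if_neg (Bool.false_ne_true), ← ofinv_mul_mk]

/-! ### the three pieces of the Borel isomorphism -/

/-- the `(2^ℕ)^G`-component -/
def Smap (x : G → Bool) (z : Z) : G → ℕ → Bool :=
  fun h n => xor (x h) (x (S.act z (tgen n) h))

/-- coboundary formula: path-sums of `Smap x z` telescope -/
lemma pSumF_coboundary (x : G → Bool) (z : Z) (W : FreeGroup ℕ) (p : G) :
    S.pSumF (S.Smap x z) z W p = xor (x (S.act z (Φ W) p)) (x p) := by
  induction W using Quot.inductionOn with
  | h L =>
    rw [FreeGroup.quot_mk_eq_mk]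
    induction L with
    | nil =>
      rw [show FreeGroup.mk ([] : List (ℕ × Bool)) = 1 from rfl, map_one, S.act_one]
      simp
    | cons hd tl ih =>
      obtain ⟨n, e⟩ := hd
      cases e with
      | true =>
        rw [← of_mul_mk, S.pSumF_cons, ih, map_mul, Φ_of, ← S.act_act]
        set q := S.act z (Φ (FreeGroup.mk tl)) p
        rw [show S.Smap x z q n = xor (x q) (x (S.act z (tgen n) q)) from rfl]
        cases x q <;> cases x p <;> cases x (S.act z (tgen n) q) <;> rfl
      | false =>
        rw [← ofinv_mul_mk, S.pSumF_cons_inv, ih, map_mul, map_inv, Φ_of, ← S.act_act]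
        set q := S.act z (Φ (FreeGroup.mk tl)) p with hq
        set q' := S.act z (tgen n)⁻¹ q with hq'
        have hQ : S.act z (tgen n) q' = q := by
          rw [hq', S.act_act, mul_inv_cancel, S.act_one]
        rw [show S.Smap x z q' n = xor (x q') (x (S.act z (tgen n) q')) from rfl, hQ]
        cases x q <;> cases x p <;> cases x q' <;> rfl


/-! ### infinitely many orbits -/

/-- the `u`-exponent-sum homomorphism -/
def φu : F2 →* Multiplicative ℤ :=
  FreeGroup.lift (fun i => if i = 0 then Multiplicative.ofAdd (1 : ℤ) else 1)

@[simp] lemma φu_u : φu Fu = Multiplicative.ofAdd (1 : ℤ) := by simp [φu, Fu]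
@[simp] lemma φu_v : φu Fv = 1 := by simp [φu, Fv]

lemma φu_tgen (n : ℕ) : φu (tgen n) = 1 := by
  simp [tgen, map_mul, map_pow, map_inv]

lemma φu_Φ (W : FreeGroup ℕ) : φu (Φ W) = 1 := by
  have : φu.comp Φ = 1 := by
    apply FreeGroup.ext_hom
    intro n
    simp [φu_tgen]
  calc φu (Φ W) = φu.comp Φ W := rfl
  _ = 1 := by rw [this]; rfl

lemma φu_upow (k : ℕ) : φu (Fu ^ k) = Multiplicative.ofAdd (k : ℤ) := by
  rw [map_pow, φu_u, ← ofAdd_nsmul]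
  simp

/-- the set of (codes of) orbit representatives -/
def pIdx (z : Z) : ℕ → Prop := fun n => S.rep z (S.eG.symm n) = S.eG.symm n

lemma pIdx_infinite (z : Z) : (setOf (S.pIdx z)).Infinite := by
  set h₀ := S.eG.symm 0 with hh₀
  set q : ℕ → G := fun k => S.rep z (S.act z (Fu ^ k) h₀) with hq
  have hrepq : ∀ k, S.rep z (q k) = q k := by
    intro k
    exact S.rep_rep z _
  have qinj : Function.Injective q := by
    intro j k hjk
    obtain ⟨Wj, hWj⟩ := S.rep_orb z (S.act z (Fu ^ j) h₀)
    obtain ⟨Wk, hWk⟩ := S.rep_orb z (S.act z (Fu ^ k) h₀)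
    rw [S.act_act] at hWj hWk
    have heq : S.act z (Φ Wj * Fu ^ j) h₀ = S.act z (Φ Wk * Fu ^ k) h₀ := by
      rw [hWj, hWk]; exact hjk
    have hfeq := S.act_cancel z _ _ _ heq
    have := congrArg φu hfeq
    rw [map_mul, map_mul, φu_Φ, φu_Φ, one_mul, one_mul, φu_upow, φu_upow] at this
    have h5 : (j : ℤ) = k := by simpa using congrArg Multiplicative.toAdd this
    exact_mod_cast h5
  apply Set.infinite_of_injective_forall_mem
    (f := fun k : ℕ => S.eG (q k))
  · exact S.eG.injective.comp qinj
  · intro k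
    show S.pIdx z (S.eG (q k))
    unfold pIdx
    rw [Equiv.symm_apply_apply]
    exact hrepq k

/-- the `i`-th orbit representative -/
noncomputable def cNth (z : Z) (i : ℕ) : G := S.eG.symm (Nat.nth (S.pIdx z) i)

/-- the index of an orbit representative -/
noncomputable def cIdx (z : Z) (h : G) : ℕ := Nat.count (S.pIdx z) (S.eG h)

lemma rep_cNth (z : Z) (i : ℕ) : S.rep z (S.cNth z i) = S.cNth z i :=
  Nat.nth_mem_of_infinite (S.pIdx_infinite z) i

lemma cNth_cIdx_rep (z : Z) (h : G) : S.cNth z (S.cIdx z (S.rep z h)) = S.rep z h := by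
  have hmem : S.pIdx z (S.eG (S.rep z h)) := by
    unfold pIdx
    rw [Equiv.symm_apply_apply]
    exact S.rep_rep z h
  unfold cNth cIdx
  rw [Nat.nth_count hmem, Equiv.symm_apply_apply]

lemma cIdx_cNth (z : Z) (i : ℕ) : S.cIdx z (S.cNth z i) = i := by
  unfold cNth cIdx
  rw [Equiv.apply_symm_apply]
  exact Nat.count_nth_of_infinite (S.pIdx_infinite z) i

/-! ### the map `φ` and its inverse -/

/-- the `K = 2^ℕ`-component -/
noncomputable def Rmap (x : G → Bool) (z : Z) : ℕ → ZMod 2 :=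
  fun i => if x (S.cNth z i) then 1 else 0

/-- reconstruction of `x` from `(k, y)` -/
noncomputable def recon (k : ℕ → ZMod 2) (y : G → ℕ → Bool) (z : Z) : G → Bool :=
  fun h => xor (decide (k (S.cIdx z (S.rep z h)) = 1))
    (S.pSumF y z (S.wsel z h) (S.rep z h))

/-- (I) left inverse -/
lemma recon_Rmap_Smap (x : G → Bool) (z : Z) :
    S.recon (S.Rmap x z) (S.Smap x z) z = x := by
  funext h
  unfold recon
  have h1 : S.Rmap x z (S.cIdx z (S.rep z h)) = if x (S.rep z h) then 1 else 0 := by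
    unfold Rmap
    rw [S.cNth_cIdx_rep]
  rw [h1, S.pSumF_coboundary, S.wsel_spec]
  cases hx : x (S.rep z h) <;> cases hxh : x h <;> simp [hx, hxh]

/-- (II) the `Smap` of a reconstruction -/
lemma Smap_recon (k : ℕ → ZMod 2) (y : G → ℕ → Bool) (z : Z) :
    S.Smap (S.recon k y z) z = y := by
  funext h n
  set h' := S.act z (tgen n) h with hh'
  have hrep : S.rep z h' = S.rep z h := S.rep_act z (tgen n) (FreeGroup.of n) (Φ_of n) h
  set W := S.wsel z h with hW
  have hw' : S.wsel z h' = FreeGroup.of n * W := by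
    apply S.wsel_unique
    rw [hrep, map_mul, Φ_of, ← S.act_act, hW, S.wsel_spec]
  show xor (S.recon k y z h) (S.recon k y z h') = y h n
  unfold recon
  rw [hrep, hw', S.pSumF_cons, hW, S.wsel_spec]
  set A := decide (k (S.cIdx z (S.rep z h)) = 1)
  set B := S.pSumF y z (S.wsel z h) (S.rep z h)
  cases A <;> cases B <;> cases hy : y h n <;> simp [hy]

/-- (III) the `Rmap` of a reconstruction -/
lemma Rmap_recon (k : ℕ → ZMod 2) (y : G → ℕ → Bool) (z : Z) :
    S.Rmap (S.recon k y z) z = k := by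
  funext i
  have hrep : S.rep z (S.cNth z i) = S.cNth z i := S.rep_cNth z i
  have h1 := S.wsel_spec z (S.cNth z i)
  rw [hrep] at h1
  have h2 : Φ (S.wsel z (S.cNth z i)) = Φ 1 := by
    rw [S.act_free z _ _ h1, map_one]
  have hwsel := Φ_injective h2
  unfold Rmap recon
  rw [hrep, hwsel, S.pSumF_one, cIdx_cNth]
  exact (by decide :
    ∀ c : ZMod 2, (if (xor (decide (c = 1)) false) = true then (1 : ZMod 2) else 0) = c) (k i)


/-! ### equivariance and linearity -/

lemma Smap_equiv (g : G) (x : G → Bool) (z : Z) :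
    S.Smap (bshift Bool g x) (S.a g z) = bshift (ℕ → Bool) g (S.Smap x z) := by
  funext h n
  show xor (x (g⁻¹ * h)) (x (g⁻¹ * S.act (S.a g z) (tgen n) h))
      = xor (x (g⁻¹ * h)) (x (S.act z (tgen n) (g⁻¹ * h)))
  rw [S.act_equiv' g z (tgen n) h, inv_mul_cancel_left]

lemma pSumF_false (z : Z) (W : FreeGroup ℕ) (p : G) :
    S.pSumF (fun _ _ => false) z W p = false := by
  induction W using Quot.inductionOn with
  | h L =>
    rw [FreeGroup.quot_mk_eq_mk, pSumF_mk]
    induction L with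
    | nil => rfl
    | cons hd tl ih =>
      obtain ⟨n, e⟩ := hd
      rw [pSum_cons, ih]
      cases e <;> rfl

lemma pSum_xor (y y' : G → ℕ → Bool) (z : Z) (p : G) (L : List (ℕ × Bool)) :
    S.pSum (fun h n => xor (y h n) (y' h n)) z p L
      = xor (S.pSum y z p L) (S.pSum y' z p L) := by
  induction L with
  | nil => rfl
  | cons hd tl ih =>
    obtain ⟨n, e⟩ := hd
    rw [pSum_cons, pSum_cons, pSum_cons, ih]
    cases e with
    | true =>
      simp only [if_pos rfl]
      set A := S.pSum y z p tl
      set B := S.pSum y' z p tl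
      set C := y (S.act z (Φ (FreeGroup.mk tl)) p) n
      set D := y' (S.act z (Φ (FreeGroup.mk tl)) p) n
      cases A <;> cases B <;> cases C <;> cases D <;> rfl
    | false =>
      simp only [if_neg (Bool.false_ne_true)]
      set A := S.pSum y z p tl
      set B := S.pSum y' z p tl
      set C := y (S.act z (Φ (FreeGroup.mk ((n, false) :: tl))) p) n
      set D := y' (S.act z (Φ (FreeGroup.mk ((n, false) :: tl))) p) n
      cases A <;> cases B <;> cases C <;> cases D <;> rfl

lemma pSumF_xor (y y' : G → ℕ → Bool) (z : Z) (W : FreeGroup ℕ) (p : G) :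
    S.pSumF (fun h n => xor (y h n) (y' h n)) z W p
      = xor (S.pSumF y z W p) (S.pSumF y' z W p) := by
  induction W using Quot.inductionOn with
  | h L => exact S.pSum_xor y y' z _ L

/-- the reconstruction splits as an xor of its `k`-part and its `y`-part -/
lemma recon_split (k : ℕ → ZMod 2) (y : G → ℕ → Bool) (z : Z) (h : G) :
    S.recon k y z h
      = xor (S.recon k (fun _ _ => false) z h) (S.recon 0 y z h) := by
  unfold recon
  rw [S.pSumF_false]
  have h0 : decide ((0 : ℕ → ZMod 2) (S.cIdx z (S.rep z h)) = 1) = false := by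
    simp
  rw [h0]
  set A := decide (k (S.cIdx z (S.rep z h)) = 1)
  set B := S.pSumF y z (S.wsel z h) (S.rep z h)
  cases A <;> cases B <;> rfl

lemma recon_kadd (k k' : ℕ → ZMod 2) (z : Z) (h : G) :
    S.recon (k + k') (fun _ _ => false) z h
      = xor (S.recon k (fun _ _ => false) z h) (S.recon k' (fun _ _ => false) z h) := by
  unfold recon
  rw [S.pSumF_false]
  have key : ∀ c c' : ZMod 2,
      decide (c + c' = 1) = xor (decide (c = 1)) (decide (c' = 1)) := by decide
  have h1 : (k + k') (S.cIdx z (S.rep z h)) = k (S.cIdx z (S.rep z h)) + k' (S.cIdx z (S.rep z h)) := rfl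
  rw [h1, key]
  set A := decide (k (S.cIdx z (S.rep z h)) = 1)
  set B := decide (k' (S.cIdx z (S.rep z h)) = 1)
  cases A <;> cases B <;> rfl

lemma Rmap_xor (x x' : G → Bool) (z : Z) :
    S.Rmap (fun h => xor (x h) (x' h)) z = S.Rmap x z + S.Rmap x' z := by
  funext i
  show (if (xor (x (S.cNth z i)) (x' (S.cNth z i))) = true then (1 : ZMod 2) else 0) = _
  cases hx : x (S.cNth z i) <;> cases hx' : x' (S.cNth z i) <;>
    simp [Rmap, hx, hx'] <;> decide

lemma bshift_bshift {K : Type*} (g g' : G) (x : G → K) :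
    bshift K g (bshift K g' x) = bshift K (g * g') x := by
  funext h
  show x (g'⁻¹ * (g⁻¹ * h)) = x ((g * g')⁻¹ * h)
  rw [mul_inv_rev, mul_assoc]

lemma bshift_one {K : Type*} (x : G → K) : bshift K (1 : G) x = x := by
  funext h
  show x (1⁻¹ * h) = x h
  rw [inv_one, one_mul]

lemma bshift_xor (g : G) (x x' : G → Bool) :
    bshift Bool g (fun h => xor (x h) (x' h))
      = fun h => xor (bshift Bool g x h) (bshift Bool g x' h) := rfl


/-! ### the cocycle `β` and its linear part -/

/-- the cocycle into affine bijections of `K = (ZMod 2)^ℕ` -/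
noncomputable def βmap (g : G) (y : G → ℕ → Bool) (z : Z) (k : ℕ → ZMod 2) : ℕ → ZMod 2 :=
  S.Rmap (bshift Bool g (S.recon k y z)) (S.a g z)

/-- the linear part of `βmap` -/
noncomputable def Mmap (g : G) (z : Z) (k : ℕ → ZMod 2) : ℕ → ZMod 2 :=
  S.βmap g (fun _ _ => false) z k

lemma recon_zero_false (z : Z) :
    S.recon 0 (fun _ _ => false) z = fun _ => false := by
  funext h
  unfold recon
  rw [S.pSumF_false]
  simp

lemma βmap_affine (g : G) (y : G → ℕ → Bool) (z : Z) (k : ℕ → ZMod 2) :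
    S.βmap g y z k = S.Mmap g z k + S.βmap g y z 0 := by
  unfold βmap Mmap
  have hsplit : S.recon k y z = fun h =>
      xor (S.recon k (fun _ _ => false) z h) (S.recon 0 y z h) := by
    funext h
    exact S.recon_split k y z h
  conv_lhs => rw [hsplit, bshift_xor, S.Rmap_xor]
  rfl

lemma Mmap_add (g : G) (z : Z) (k k' : ℕ → ZMod 2) :
    S.Mmap g z (k + k') = S.Mmap g z k + S.Mmap g z k' := by
  unfold Mmap βmap
  have h1 : S.recon (k + k') (fun _ _ => false) z = fun h =>
      xor (S.recon k (fun _ _ => false) z h) (S.recon k' (fun _ _ => false) z h) := by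
    funext h
    exact S.recon_kadd k k' z h
  rw [h1, bshift_xor, S.Rmap_xor]

lemma Mmap_inj (g : G) (z : Z) : Function.Injective (S.Mmap g z) := by
  intro k k' hkk
  have hfalse : bshift (ℕ → Bool) g (fun _ _ => false) = fun _ _ => false := rfl
  have key : ∀ κ : ℕ → ZMod 2,
      S.recon (S.Mmap g z κ) (fun _ _ => false) (S.a g z)
        = bshift Bool g (S.recon κ (fun _ _ => false) z) := by
    intro κ
    set x := S.recon κ (fun _ _ => false) z with hx
    have hS : S.Smap (bshift Bool g x) (S.a g z) = fun _ _ => false := by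
      rw [S.Smap_equiv, hx, S.Smap_recon, hfalse]
    have hR : S.Rmap (bshift Bool g x) (S.a g z) = S.Mmap g z κ := rfl
    calc S.recon (S.Mmap g z κ) (fun _ _ => false) (S.a g z)
        = S.recon (S.Rmap (bshift Bool g x) (S.a g z))
            (S.Smap (bshift Bool g x) (S.a g z)) (S.a g z) := by rw [hR, hS]
    _ = bshift Bool g x := S.recon_Rmap_Smap _ _

  have h1 : bshift Bool g (S.recon k (fun _ _ => false) z)
      = bshift Bool g (S.recon k' (fun _ _ => false) z) := by
    rw [← key k, ← key k', hkk]
  have h2 : S.recon k (fun _ _ => false) z = S.recon k' (fun _ _ => false) z := by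
    have := congrArg (bshift Bool g⁻¹) h1
    rwa [bshift_bshift, bshift_bshift, inv_mul_cancel, bshift_one, bshift_one] at this
  calc k = S.Rmap (S.recon k (fun _ _ => false) z) z := (S.Rmap_recon _ _ z).symm
  _ = S.Rmap (S.recon k' (fun _ _ => false) z) z := by rw [h2]
  _ = k' := S.Rmap_recon _ _ z

lemma Mmap_surj (g : G) (z : Z) : Function.Surjective (S.Mmap g z) := by
  intro k'
  have hfalse : bshift (ℕ → Bool) g (fun _ _ => false) = fun _ _ => false := rfl
  set xt := S.recon k' (fun _ _ => false) (S.a g z) with hxt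
  set x := bshift Bool g⁻¹ xt with hxdef
  have hgx : bshift Bool g x = xt := by
    rw [hxdef, bshift_bshift, mul_inv_cancel, bshift_one]
  have hSxt : S.Smap xt (S.a g z) = fun _ _ => false := S.Smap_recon _ _ _
  have hSx : S.Smap x z = fun _ _ => false := by
    have h1 : bshift (ℕ → Bool) g (S.Smap x z) = fun _ _ => false := by
      rw [← S.Smap_equiv, hgx, hSxt]
    have := congrArg (bshift (ℕ → Bool) g⁻¹) h1
    rwa [bshift_bshift, inv_mul_cancel, bshift_one,
      show bshift (ℕ → Bool) g⁻¹ (fun _ _ => false) = fun _ _ => false from rfl] at this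
  refine ⟨S.Rmap x z, ?_⟩
  have hrec : S.recon (S.Rmap x z) (fun _ _ => false) z = x := by
    rw [← hSx]
    exact S.recon_Rmap_Smap x z
  show S.Rmap (bshift Bool g (S.recon (S.Rmap x z) (fun _ _ => false) z)) (S.a g z) = k'
  rw [hrec, hgx, hxt, S.Rmap_recon]

/-- the cocycle identity for `βmap` -/
lemma βmap_cocycle (g₁ g₂ : G) (y : G → ℕ → Bool) (z : Z) (k : ℕ → ZMod 2) :
    S.βmap (g₂ * g₁) y z k
      = S.βmap g₂ (bshift (ℕ → Bool) g₁ y) (S.a g₁ z) (S.βmap g₁ y z k) := by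
  set x := S.recon k y z with hx
  have hrec : S.recon (S.βmap g₁ y z k) (bshift (ℕ → Bool) g₁ y) (S.a g₁ z)
      = bshift Bool g₁ x := by
    have hS : S.Smap (bshift Bool g₁ x) (S.a g₁ z) = bshift (ℕ → Bool) g₁ y := by
      rw [S.Smap_equiv, hx, S.Smap_recon]
    have hR : S.Rmap (bshift Bool g₁ x) (S.a g₁ z) = S.βmap g₁ y z k := rfl
    calc S.recon (S.βmap g₁ y z k) (bshift (ℕ → Bool) g₁ y) (S.a g₁ z)
        = S.recon (S.Rmap (bshift Bool g₁ x) (S.a g₁ z))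
            (S.Smap (bshift Bool g₁ x) (S.a g₁ z)) (S.a g₁ z) := by rw [hR, hS]
    _ = bshift Bool g₁ x := S.recon_Rmap_Smap _ _
  show S.Rmap (bshift Bool (g₂ * g₁) x) (S.a (g₂ * g₁) z) = S.Rmap
      (bshift Bool g₂ (S.recon (S.βmap g₁ y z k) (bshift (ℕ → Bool) g₁ y) (S.a g₁ z)))
      (S.a g₂ (S.a g₁ z))
  rw [hrec, bshift_bshift, S.amul']


/-! ### measurability -/

section Meas

variable [Countable G] [MeasurableSpace G] [DiscreteMeasurableSpace G] [MeasurableSpace Z]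
variable (hameas : ∀ g : G, Measurable (S.a g))
variable (hαmeas : ∀ f : F2, Measurable (S.α f))

/-- combination of two countably-valued measurable functions is measurable -/
lemma meas_comb {W : Type*} [MeasurableSpace W] {A B C : Type*}
    [MeasurableSpace A] [MeasurableSingletonClass A] [Countable A]
    [MeasurableSpace B] [MeasurableSingletonClass B] [Countable B]
    [MeasurableSpace C] {f : W → A} {g : W → B} (hf : Measurable f) (hg : Measurable g)
    (F : A → B → C) : Measurable (fun w => F (f w) (g w)) :=
  (measurable_of_countable (fun p : A × B => F p.1 p.2)).comp (hf.prodMk hg)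

include hameas hαmeas in
lemma meas_act (f : F2) (h : G) : Measurable (fun z => S.act z f h) := by
  unfold act
  have h1 : Measurable (fun z => S.α f (S.a h⁻¹ z)) := (hαmeas f).comp (hameas h⁻¹)
  exact (measurable_of_countable (fun g' : G => h * g'⁻¹)).comp h1

include hameas hαmeas in
lemma meas_actset (f : F2) (h g' : G) : MeasurableSet {z | S.act z f h = g'} :=
  S.meas_act hameas hαmeas f h (MeasurableSet.singleton g')

include hameas hαmeas in
lemma meas_minIdx (h : G) : Measurable (fun z => S.minIdx z h) := by
  apply measurable_to_countable'
  intro m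
  have key : (fun z => S.minIdx z h) ⁻¹' {m} =
      {z | (∃ W : FreeGroup ℕ, S.act z (Φ W) h = S.eG.symm m) ∧
        ∀ j, j < m → ¬ ∃ W : FreeGroup ℕ, S.act z (Φ W) h = S.eG.symm j} := by
    ext z
    simp only [Set.mem_preimage, Set.mem_singleton_iff, Set.mem_setOf_eq]
    exact Nat.find_eq_iff (S.orb_nonempty z h)
  rw [key]
  have hP : ∀ j, MeasurableSet {z | ∃ W : FreeGroup ℕ, S.act z (Φ W) h = S.eG.symm j} := by
    intro j
    have : {z | ∃ W : FreeGroup ℕ, S.act z (Φ W) h = S.eG.symm j}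
        = ⋃ W : FreeGroup ℕ, {z | S.act z (Φ W) h = S.eG.symm j} := by
      ext z; simp
    rw [this]
    exact MeasurableSet.iUnion fun W => S.meas_actset hameas hαmeas (Φ W) h _
  have hsplit : {z | (∃ W : FreeGroup ℕ, S.act z (Φ W) h = S.eG.symm m) ∧
        ∀ j, j < m → ¬ ∃ W : FreeGroup ℕ, S.act z (Φ W) h = S.eG.symm j}
      = {z | ∃ W : FreeGroup ℕ, S.act z (Φ W) h = S.eG.symm m} ∩
        ⋂ j, ⋂ (_ : j < m), {z | ∃ W : FreeGroup ℕ, S.act z (Φ W) h = S.eG.symm j}ᶜ := by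
    ext z; simp [Set.mem_setOf_eq]
  rw [hsplit]
  exact (hP m).inter
    (MeasurableSet.iInter fun j => MeasurableSet.iInter fun _ => (hP j).compl)

include hameas hαmeas in
lemma meas_rep (h : G) : Measurable (fun z => S.rep z h) :=
  (measurable_of_countable _).comp (S.meas_minIdx hameas hαmeas h)

include hameas hαmeas in
lemma meas_pIdxset (n : ℕ) : MeasurableSet {z | S.pIdx z n} :=
  S.meas_rep hameas hαmeas (S.eG.symm n) (MeasurableSet.singleton (S.eG.symm n))

include hameas hαmeas in
lemma meas_count (n : ℕ) : Measurable (fun z => Nat.count (S.pIdx z) n) := by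
  induction n with
  | zero => simpa using measurable_const
  | succ m ih =>
    have : (fun z => Nat.count (S.pIdx z) (m + 1))
        = fun z => Nat.count (S.pIdx z) m + if S.pIdx z m then 1 else 0 := by
      funext z
      rw [Nat.count_succ]
    rw [this]
    have hind : Measurable (fun z => if S.pIdx z m then (1 : ℕ) else 0) :=
      Measurable.ite (S.meas_pIdxset hameas hαmeas m) measurable_const measurable_const
    exact meas_comb ih hind (fun u v => u + v)

lemma nth_eq_iff_inf {p : ℕ → Prop} (hp : (setOf p).Infinite) (i n : ℕ) :
    Nat.nth p i = n ↔ p n ∧ Nat.count p n = i := by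
  constructor
  · rintro rfl
    exact ⟨Nat.nth_mem_of_infinite hp i, Nat.count_nth_of_infinite hp i⟩
  · rintro ⟨h1, h2⟩
    rw [← h2, Nat.nth_count h1]

include hameas hαmeas in
lemma meas_nth (i : ℕ) : Measurable (fun z => Nat.nth (S.pIdx z) i) := by
  apply measurable_to_countable'
  intro n
  have key : (fun z => Nat.nth (S.pIdx z) i) ⁻¹' {n}
      = {z | S.pIdx z n} ∩ {z | Nat.count (S.pIdx z) n = i} := by
    ext z
    simp only [Set.mem_preimage, Set.mem_singleton_iff, Set.mem_inter_iff, Set.mem_setOf_eq]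
    exact nth_eq_iff_inf (S.pIdx_infinite z) i n
  rw [key]
  exact (S.meas_pIdxset hameas hαmeas n).inter
    (S.meas_count hameas hαmeas n (MeasurableSet.singleton i))

include hameas hαmeas in
lemma meas_cNth (i : ℕ) : Measurable (fun z => S.cNth z i) :=
  (measurable_of_countable _).comp (S.meas_nth hameas hαmeas i)

/-- evaluation of the Bernoulli coordinate at a measurably-varying point -/
lemma meas_eval {c : Z → G} (hc : Measurable c) :
    Measurable (fun p : (G → Bool) × Z => p.1 (c p.2)) := by
  apply measurable_to_countable'
  intro bb
  have key : (fun p : (G → Bool) × Z => p.1 (c p.2)) ⁻¹' {bb}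
      = ⋃ g : G, ((fun x : G → Bool => x g) ∘ Prod.fst) ⁻¹' {bb} ∩ (c ∘ Prod.snd) ⁻¹' {g} := by
    ext p
    simp only [Set.mem_preimage, Set.mem_singleton_iff, Set.mem_iUnion, Set.mem_inter_iff,
      Function.comp_apply]
    constructor
    · intro hp; exact ⟨c p.2, hp, rfl⟩
    · rintro ⟨g, hp, hg⟩; rw [hg]; exact hp
  rw [key]
  exact MeasurableSet.iUnion fun g =>
    (((measurable_pi_apply g).comp measurable_fst) (MeasurableSet.singleton bb)).inter
      ((hc.comp measurable_snd) (MeasurableSet.singleton g))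

include hameas hαmeas in
lemma meas_Rmap : Measurable (fun p : (G → Bool) × Z => S.Rmap p.1 p.2) := by
  apply measurable_pi_lambda
  intro i
  have : (fun p : (G → Bool) × Z => S.Rmap p.1 p.2 i)
      = fun p : (G → Bool) × Z => if p.1 (S.cNth p.2 i) then (1 : ZMod 2) else 0 := rfl
  rw [this]
  exact meas_comb (meas_eval (S.meas_cNth hameas hαmeas i))
    (measurable_const (a := (0 : ZMod 2)))
    (fun bb _ => if bb then (1 : ZMod 2) else 0)

include hameas hαmeas in
lemma meas_Smap : Measurable (fun p : (G → Bool) × Z => S.Smap p.1 p.2) := by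
  apply measurable_pi_lambda
  intro h
  apply measurable_pi_lambda
  intro n
  have : (fun p : (G → Bool) × Z => S.Smap p.1 p.2 h n)
      = fun p : (G → Bool) × Z => xor (p.1 h) (p.1 (S.act p.2 (tgen n) h)) := rfl
  rw [this]
  exact meas_comb ((measurable_pi_apply h).comp measurable_fst)
    (meas_eval (S.meas_act hameas hαmeas (tgen n) h)) xor

include hameas hαmeas in
lemma meas_Mmap (g : G) (z : Z) : Measurable (S.Mmap g z) := by
  apply measurable_pi_lambda
  intro i
  have key : (fun k : ℕ → ZMod 2 => S.Mmap g z k i)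
      = (fun c : ZMod 2 =>
          if xor (decide (c = 1))
            (S.pSumF (fun _ _ => false) z
              (S.wsel z (g⁻¹ * S.cNth (S.a g z) i))
              (S.rep z (g⁻¹ * S.cNth (S.a g z) i))) = true then (1 : ZMod 2) else 0)
        ∘ (fun k => k (S.cIdx z (S.rep z (g⁻¹ * S.cNth (S.a g z) i)))) := rfl
  rw [key]
  exact (measurable_of_countable _).comp (measurable_pi_apply _)

end Meas


/-! ### continuity -/

section Cont

variable [TopologicalSpace Z]

lemma cont_eval {c : Z → G} (hc : IsLocallyConstant c) :
    Continuous (fun p : (G → Bool) × Z => p.1 (c p.2)) := by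
  have hfiber : ∀ bb : Bool, IsOpen {p : (G → Bool) × Z | p.1 (c p.2) = bb} := by
    intro bb
    rw [isOpen_iff_mem_nhds]
    rintro ⟨x0, z0⟩ hmem
    have hV : IsOpen {x : G → Bool | x (c z0) = bb} := by
      have h0 := (continuous_apply (c z0) : Continuous fun x : G → Bool => x (c z0)).isOpen_preimage ({bb} : Set Bool) (isOpen_discrete _)
      exact h0
    have hU : IsOpen {z : Z | c z = c z0} := hc.isOpen_fiber (c z0)
    have hsub : {x : G → Bool | x (c z0) = bb} ×ˢ {z : Z | c z = c z0}
        ⊆ {p : (G → Bool) × Z | p.1 (c p.2) = bb} := by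
      rintro ⟨x, z⟩ ⟨hx, hz⟩
      show x (c z) = bb
      rw [show c z = c z0 from hz]
      exact hx
    refine Filter.mem_of_superset ?_ hsub
    exact (hV.prod hU).mem_nhds ⟨hmem, rfl⟩
  rw [continuous_def]
  intro s _
  have : (fun p : (G → Bool) × Z => p.1 (c p.2)) ⁻¹' s
      = ⋃ bb ∈ s, {p : (G → Bool) × Z | p.1 (c p.2) = bb} := by
    ext p
    simp only [Set.mem_preimage, Set.mem_iUnion, Set.mem_setOf_eq]
    constructor
    · intro hp; exact ⟨p.1 (c p.2), hp, rfl⟩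
    · rintro ⟨bb, hbb, hp⟩; rw [hp]; exact hbb
  rw [this]
  exact isOpen_biUnion fun bb _ => hfiber bb

lemma cont_Smap (hacont : ∀ g : G, Continuous (S.a g))
    (hαlc : ∀ f : F2, IsLocallyConstant (S.α f)) :
    Continuous (fun p : (G → Bool) × Z => S.Smap p.1 p.2) := by
  apply continuous_pi
  intro h
  apply continuous_pi
  intro n
  have hc : IsLocallyConstant (fun z => S.act z (tgen n) h) := by
    have h1 : IsLocallyConstant (fun z => S.α (tgen n) (S.a h⁻¹ z)) :=
      (hαlc (tgen n)).comp_continuous (hacont h⁻¹)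
    exact h1.comp (fun g' : G => h * g'⁻¹)
  have hcont2 : Continuous (fun p : (G → Bool) × Z => p.1 (S.act p.2 (tgen n) h)) :=
    cont_eval hc
  have hcont1 : Continuous (fun p : (G → Bool) × Z => p.1 h) :=
    (continuous_apply h).comp continuous_fst
  have : (fun p : (G → Bool) × Z => S.Smap p.1 p.2 h n)
      = (fun q : Bool × Bool => xor q.1 q.2)
        ∘ (fun p : (G → Bool) × Z => (p.1 h, p.1 (S.act p.2 (tgen n) h))) := rfl
  rw [this]
  exact (continuous_of_discreteTopology).comp (hcont1.prodMk hcont2)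

end Cont

end Setup
end Stmt10

theorem stmt10 (G : Type*) [Group G] [Countable G] [Infinite G]
    [MeasurableSpace G] [DiscreteMeasurableSpace G]
    (Z : Type) [MeasurableSpace Z] [StandardBorelSpace Z]
    -- a Borel action of G on Z
    (a : G → Z → Z) (ha1 : a 1 = id) (hamul : ∀ g g' : G, a (g * g') = a g ∘ a g')
    (hameas : ∀ g : G, Measurable (a g))
    -- a Borel action of F₂ on Z
    (b : F2 → Z → Z) (hb1 : b 1 = id) (hbmul : ∀ f f' : F2, b (f * f') = b f ∘ b f')
    (hbmeas : ∀ f : F2, Measurable (b f))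
    -- every F₂-orbit is contained in a G-orbit
    (horbit : ∀ (f : F2) (z : Z), ∃ g : G, b f z = a g z)
    -- a Borel cocycle α : F₂ × Z → G relating the actions
    (α : F2 → Z → G) (hαmeas : ∀ f : F2, Measurable (α f))
    (hαcoc : ∀ (f₁ f₂ : F2) (z : Z), α (f₂ * f₁) z = α f₂ (b f₁ z) * α f₁ z)
    (hα : ∀ (f : F2) (z : Z), a (α f z) z = b f z)
    (hαinj : ∀ z : Z, Function.Injective fun f : F2 => α f z) :
    ∃ (K : Type) (_ : TopologicalSpace K) (_ : MeasurableSpace K) (_ : AddCommGroup K),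
      BorelSpace K ∧ CompactSpace K ∧ TopologicalSpace.MetrizableSpace K ∧
      IsTopologicalAddGroup K ∧
      ∃ β : G → (G → (ℕ → Bool)) → Z → K → K,
        -- each β(g, y, z) is a Borel affine bijection of K
        (∀ (g : G) (y : G → (ℕ → Bool)) (z : Z), ∃ (σ : K ≃+ K) (t : K),
          Measurable (⇑σ) ∧ ∀ k : K, β g y z k = σ k + t) ∧
        -- the cocycle identity
        (∀ (g₁ g₂ : G) (y : G → (ℕ → Bool)) (z : Z),
          β (g₂ * g₁) y z = (β g₂ (bshift (ℕ → Bool) g₁ y) (a g₁ z)) ∘ (β g₁ y z)) ∧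
        -- the equivariant Borel bijection
        ∃ φ : (G → Bool) × Z → K × (G → (ℕ → Bool)) × Z,
          Measurable φ ∧ Function.Bijective φ ∧
          (∀ (g : G) (p : (G → Bool) × Z),
            φ (bshift Bool g p.1, a g p.2) =
              (β g (φ p).2.1 (φ p).2.2 (φ p).1,
               bshift (ℕ → Bool) g (φ p).2.1, a g (φ p).2.2)) ∧
          -- moreover: continuity of the induced projection in the topological setting
          (∀ (tZ : TopologicalSpace Z), BorelSpace Z → PolishSpace Z →
            (∀ g : G, Continuous (a g)) →
            (∀ f : F2, Continuous (b f)) →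
            (∀ f : F2, IsLocallyConstant (α f)) →
            Continuous fun p : (G → Bool) × Z => (φ p).2.1) := by
  classical
  obtain ⟨eG⟩ : Nonempty (G ≃ ℕ) := nonempty_equiv_of_countable
  set S : Stmt10.Setup G Z :=
    ⟨a, b, α, ha1, hamul, hb1, hαcoc, hα, hαinj, eG⟩ with hS
  refine ⟨ℕ → ZMod 2, inferInstance, inferInstance, inferInstance,
    inferInstance, inferInstance, inferInstance, inferInstance,
    S.βmap, ?_, ?_, ?_⟩
  · -- affine
    intro g y z
    refine ⟨AddEquiv.mk' (Equiv.ofBijective (S.Mmap g z)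
      ⟨S.Mmap_inj g z, S.Mmap_surj g z⟩) (S.Mmap_add g z), S.βmap g y z 0, ?_, ?_⟩
    · exact S.meas_Mmap hameas hαmeas g z
    · intro k
      exact S.βmap_affine g y z k
  · -- cocycle
    intro g₁ g₂ y z
    funext k
    exact S.βmap_cocycle g₁ g₂ y z k
  · -- the bijection
    refine ⟨fun p => (S.Rmap p.1 p.2, S.Smap p.1 p.2, p.2), ?_, ?_, ?_, ?_⟩
    · exact (S.meas_Rmap hameas hαmeas).prodMk
        ((S.meas_Smap hameas hαmeas).prodMk measurable_snd)
    · apply Function.bijective_iff_has_inverse.mpr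
      refine ⟨fun q => (S.recon q.1 q.2.1 q.2.2, q.2.2), ?_, ?_⟩
      · intro p
        show (S.recon (S.Rmap p.1 p.2) (S.Smap p.1 p.2) p.2, p.2) = p
        rw [S.recon_Rmap_Smap]
      · intro q
        show (S.Rmap (S.recon q.1 q.2.1 q.2.2) q.2.2,
          S.Smap (S.recon q.1 q.2.1 q.2.2) q.2.2, q.2.2) = q
        rw [S.Rmap_recon, S.Smap_recon]
    · intro g p
      show (S.Rmap (bshift Bool g p.1) (S.a g p.2),
          S.Smap (bshift Bool g p.1) (S.a g p.2), S.a g p.2)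
        = (S.βmap g (S.Smap p.1 p.2) p.2 (S.Rmap p.1 p.2),
          bshift (ℕ → Bool) g (S.Smap p.1 p.2), S.a g p.2)
      have h1 : S.βmap g (S.Smap p.1 p.2) p.2 (S.Rmap p.1 p.2)
          = S.Rmap (bshift Bool g p.1) (S.a g p.2) := by
        show S.Rmap (bshift Bool g
          (S.recon (S.Rmap p.1 p.2) (S.Smap p.1 p.2) p.2)) (S.a g p.2) = _
        rw [S.recon_Rmap_Smap]
      rw [h1, S.Smap_equiv]
    · intro tZ _ _ hacont hbcont hαlc
      exact S.cont_Smap hacont hαlc
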